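/- Let θ : (0,1] → ℝ be C¹ with t·θ'(t) → 0 as t → 0. Define the spiral curve γ(t) = t·(cos θ(t), sin θ(t)) and K = closure(γ((0,1])) ∪ {0}. Then H¹(K ∩ B(0,r)) = ∫₀^r √(1 + t²θ'(t)²) dt = r + o(r) as r → 0; in particular K has Hausdorff 1-density 1/2 at the origin: lim_{r→0} H¹(K ∩ B(0,r))/(2r) = 1/2. -/

import Mathlib

open MeasureTheory Metric Set Filter
open scoped ENNReal Topology

open scoped NNReal


lemma h1_ge_dist {X : Type*} [MetricSpace X] [MeasurableSpace X] [BorelSpace X]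
    {S : Set X} (hS : IsPreconnected S) {x y : X} (hx : x ∈ S) (hy : y ∈ S) :
    ENNReal.ofReal (dist x y) ≤ μH[1] S := by
  have hlip : LipschitzWith 1 (fun z => dist z x) := LipschitzWith.dist_left x
  have himg : IsPreconnected ((fun z => dist z x) '' S) :=
    hS.image _ hlip.continuous.continuousOn
  have h0 : (0:ℝ) ∈ (fun z => dist z x) '' S := ⟨x, hx, by simp⟩
  have hd : dist y x ∈ (fun z => dist z x) '' S := ⟨y, hy, rfl⟩
  have hsub : Set.Icc (0:ℝ) (dist y x) ⊆ (fun z => dist z x) '' S :=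
    himg.ordConnected.out h0 hd
  calc ENNReal.ofReal (dist x y) = μH[1] (Set.Icc (0:ℝ) (dist y x)) := by
        rw [hausdorffMeasure_real, Real.volume_Icc, dist_comm]; norm_num
    _ ≤ μH[1] ((fun z => dist z x) '' S) := measure_mono hsub
    _ ≤ (1:ℝ≥0) ^ (1:ℝ) * μH[1] S := hlip.hausdorffMeasure_image_le zero_le_one S
    _ = μH[1] S := by simp

lemma h1_singleton {X : Type*} [MetricSpace X] [MeasurableSpace X] [BorelSpace X] (x : X) :
    μH[1] ({x} : Set X) = 0 :=
  hausdorffMeasure_of_dimH_lt (d := 1) (by rw [dimH_singleton]; norm_num)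

lemma h1_image_le {E : Type*} [NormedAddCommGroup E] [NormedSpace ℝ E]
    [MeasurableSpace E] [BorelSpace E]
    {γ Γ' : ℝ → E} {s : Set ℝ} (hs : Convex ℝ s)
    (hd : ∀ t ∈ s, HasDerivAt γ (Γ' t) t)
    {M : ℝ≥0} (hM : ∀ t ∈ s, ‖Γ' t‖₊ ≤ M) :
    μH[1] (γ '' s) ≤ (M : ℝ≥0∞) * volume s := by
  have hlip : LipschitzOnWith M γ s :=
    hs.lipschitzOnWith_of_nnnorm_hasDerivWithin_le
      (fun t ht => (hd t ht).hasDerivWithinAt) hM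
  calc μH[1] (γ '' s) ≤ (M : ℝ≥0∞) ^ (1:ℝ) * μH[1] s :=
        hlip.hausdorffMeasure_image_le zero_le_one
    _ = (M : ℝ≥0∞) * volume s := by rw [hausdorffMeasure_real]; norm_num

variable {E : Type*} [NormedAddCommGroup E] [InnerProductSpace ℝ E]
  [MeasurableSpace E] [BorelSpace E] [CompleteSpace E]

lemma image_Ioc_eq {γ : ℝ → E} {a b c d : ℝ} (hsub : Set.Icc c d ⊆ Set.Icc a b)
    (hcd : c ≤ d) (hinj : Set.InjOn γ (Set.Icc a b)) :
    γ '' Set.Ioc c d = (γ '' Set.Icc c d) \ {γ c} := by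
  ext x
  constructor
  · rintro ⟨t, ht, rfl⟩
    refine ⟨⟨t, Ioc_subset_Icc_self ht, rfl⟩, ?_⟩
    simp only [mem_singleton_iff]
    intro h
    have := hinj (hsub (Ioc_subset_Icc_self ht)) (hsub (left_mem_Icc.2 hcd)) h
    exact absurd this (ne_of_gt ht.1)
  · rintro ⟨⟨t, ht, rfl⟩, hne⟩
    refine ⟨t, ⟨?_, ht.2⟩, rfl⟩
    rcases eq_or_lt_of_le ht.1 with h | h
    · exact absurd (by rw [h]; exact rfl) hne
    · exact h

lemma seg {γ Γ' : ℝ → E} {a b : ℝ} (hab : a < b)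
    (hd : ∀ t ∈ Set.Icc a b, HasDerivAt γ (Γ' t) t)
    (hc : ContinuousOn Γ' (Set.Icc a b))
    (hone : ∀ t ∈ Set.Icc a b, (1:ℝ) ≤ ‖Γ' t‖)
    (hinj : Set.InjOn γ (Set.Icc a b)) :
    μH[1] (γ '' Set.Ioc a b) = ∫⁻ t in Set.Ioc a b, (‖Γ' t‖₊ : ℝ≥0∞) := by
  have hγcont : ContinuousOn γ (Set.Icc a b) :=
    fun t ht => ((hd t ht).continuousAt).continuousWithinAt
  have key : ∀ ε : ℝ, 0 < ε →
      μH[1] (γ '' Set.Ioc a b) ≤ (∫⁻ t in Set.Ioc a b, (‖Γ' t‖₊ : ℝ≥0∞))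
          + ENNReal.ofReal (2*ε*(b-a)) ∧
      (∫⁻ t in Set.Ioc a b, (‖Γ' t‖₊ : ℝ≥0∞)) ≤ μH[1] (γ '' Set.Ioc a b)
          + ENNReal.ofReal (2*ε*(b-a)) := by
    intro ε hε
    have huc := isCompact_Icc.uniformContinuousOn_of_continuous hc
    rw [Metric.uniformContinuousOn_iff] at huc
    obtain ⟨δ, hδ, hδ'⟩ := huc ε hε
    obtain ⟨n, hn⟩ := exists_nat_gt ((b - a)/δ)
    set N : ℕ := n + 1 with hN
    set Δ : ℝ := (b - a)/N with hΔdef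
    have hNpos : (0:ℝ) < N := by exact_mod_cast Nat.succ_pos n
    have hΔ : 0 < Δ := div_pos (by linarith) hNpos
    have hΔδ : Δ < δ := by
      rw [hΔdef, div_lt_iff₀ hNpos]
      have h1 : (b - a)/δ < N := lt_of_le_of_lt hn.le (by exact_mod_cast Nat.lt_succ_self n)
      calc b - a = ((b-a)/δ) * δ := by field_simp
        _ < N * δ := mul_lt_mul_of_pos_right h1 hδ
        _ = δ * N := mul_comm _ _
    set T : ℕ → ℝ := fun i => a + i * Δ with hT
    have hTm : StrictMono T := by
      intro i j hij
      simp only [hT, add_lt_add_iff_left]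
      exact mul_lt_mul_of_pos_right (by exact_mod_cast hij) hΔ
    have hT0 : T 0 = a := by simp [hT]
    have hTN : T N = b := by
      simp only [hT, hΔdef]
      field_simp
      ring
    have hstep : ∀ i : ℕ, T (i+1) - T i = Δ := by
      intro i; simp only [hT]; push_cast; ring
    have hTmem : ∀ i ≤ N, T i ∈ Set.Icc a b := by
      intro i hi
      constructor
      · rw [← hT0]; exact hTm.monotone (Nat.zero_le i)
      · rw [← hTN]; exact hTm.monotone hi
    have hsubIcc : ∀ i < N, Set.Icc (T i) (T (i+1)) ⊆ Set.Icc a b := by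
      intro i hi
      exact Set.Icc_subset_Icc (hTmem i hi.le).1 (hTmem (i+1) hi).2
    have hcover : ∀ m : ℕ, (⋃ i ∈ Finset.range m, Set.Ioc (T i) (T (i+1)))
        = Set.Ioc (T 0) (T m) := by
      intro m
      induction m with
      | zero => simp
      | succ m ih =>
        rw [Finset.range_add_one]
        simp only [Finset.mem_insert, Set.iUnion_iUnion_eq_or_left]
        rw [ih, Set.union_comm, Set.Ioc_union_Ioc_eq_Ioc
          (hTm.monotone (Nat.zero_le m)) (hTm.monotone (Nat.le_succ m))]
    have hdisj : (↑(Finset.range N) : Set ℕ).PairwiseDisjoint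
        (fun i => Set.Ioc (T i) (T (i+1))) := by
      intro i _ j _ hij
      refine Set.Ioc_disjoint_Ioc.2 ?_
      rcases hij.lt_or_gt with h | h
      · exact le_trans (min_le_left _ _)
          (le_trans (hTm.monotone (show i+1 ≤ j by omega)) (le_max_right _ _))
      · exact le_trans (min_le_right _ _)
          (le_trans (hTm.monotone (show j+1 ≤ i by omega)) (le_max_left _ _))
    have hdisjγ : (↑(Finset.range N) : Set ℕ).PairwiseDisjoint
        (fun i => γ '' Set.Ioc (T i) (T (i+1))) := by
      intro i hi j hj hij
      refine Set.disjoint_image_image (fun x hx y hy => ?_)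
      intro hxy
      have hx' : x ∈ Set.Icc a b := (hsubIcc i (Finset.mem_range.1 hi)) (Set.Ioc_subset_Icc_self hx)
      have hy' : y ∈ Set.Icc a b := (hsubIcc j (Finset.mem_range.1 hj)) (Set.Ioc_subset_Icc_self hy)
      have := hinj hx' hy' hxy
      exact Set.disjoint_left.1 (hdisj hi hj hij) hx (this ▸ hy)
    have hmeas : ∀ i < N, MeasurableSet (γ '' Set.Ioc (T i) (T (i+1))) := by
      intro i hi
      rw [image_Ioc_eq (hsubIcc i hi) (hTm (Nat.lt_succ_self i)).le hinj]
      exact ((isCompact_Icc.image_of_continuousOn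
        (hγcont.mono (hsubIcc i hi))).measurableSet).diff (measurableSet_singleton _)
    have hμsplit : μH[1] (γ '' Set.Ioc a b)
        = ∑ i ∈ Finset.range N, μH[1] (γ '' Set.Ioc (T i) (T (i+1))) := by
      conv_lhs => rw [← hT0, ← hTN, ← hcover N]
      rw [Set.image_iUnion₂]
      exact measure_biUnion_finset hdisjγ (fun i hi => hmeas i (Finset.mem_range.1 hi))
    have hlsplit : (∫⁻ t in Set.Ioc a b, (‖Γ' t‖₊ : ℝ≥0∞))
        = ∑ i ∈ Finset.range N, ∫⁻ t in Set.Ioc (T i) (T (i+1)), (‖Γ' t‖₊ : ℝ≥0∞) := by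
      conv_lhs => rw [← hT0, ← hTN, ← hcover N]
      exact lintegral_biUnion_finset hdisj (fun i _ => measurableSet_Ioc) _
    have hpiece : ∀ i < N,
        μH[1] (γ '' Set.Ioc (T i) (T (i+1)))
          ≤ (∫⁻ t in Set.Ioc (T i) (T (i+1)), (‖Γ' t‖₊ : ℝ≥0∞))
            + ENNReal.ofReal (2*ε*Δ) ∧
        (∫⁻ t in Set.Ioc (T i) (T (i+1)), (‖Γ' t‖₊ : ℝ≥0∞))
          ≤ μH[1] (γ '' Set.Ioc (T i) (T (i+1))) + ENNReal.ofReal (2*ε*Δ) := by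
      intro i hi
      set c := T i with hc'
      set d := T (i+1) with hd'
      have hcd : c < d := hTm (Nat.lt_succ_self i)
      have hsub : Set.Icc c d ⊆ Set.Icc a b := hsubIcc i hi
      have hdc : d - c = Δ := hstep i
      have hucc : ∀ x ∈ Set.Icc c d, ‖Γ' x - Γ' c‖ ≤ ε := by
        intro x hx
        have h1 : dist x c < δ := by
          rw [Real.dist_eq, abs_of_nonneg (by linarith [hx.1])]
          calc x - c ≤ d - c := by linarith [hx.2]
            _ = Δ := hdc
            _ < δ := hΔδ
        have := hδ' x (hsub hx) c (hsub (Set.left_mem_Icc.2 hcd.le)) h1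
        rw [dist_eq_norm] at this
        exact this.le
      have hnormc : (1:ℝ) ≤ ‖Γ' c‖ := hone c (hsub (Set.left_mem_Icc.2 hcd.le))
      have hub : ∀ x ∈ Set.Icc c d, ‖Γ' x‖ ≤ ‖Γ' c‖ + ε := by
        intro x hx
        have h2 : ‖Γ' x‖ - ‖Γ' c‖ ≤ ‖Γ' x - Γ' c‖ := norm_sub_norm_le _ _
        linarith [hucc x hx]
      have hlb : ∀ x ∈ Set.Icc c d, ‖Γ' c‖ - ε ≤ ‖Γ' x‖ := by
        intro x hx
        have h2 : ‖Γ' c‖ - ‖Γ' x‖ ≤ ‖Γ' c - Γ' x‖ := norm_sub_norm_le _ _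
        rw [norm_sub_rev] at h2
        linarith [hucc x hx]
      have hFTC : γ d - γ c = ∫ x in c..d, Γ' x :=
        (intervalIntegral.integral_eq_sub_of_hasDerivAt
          (fun x hx => hd x (hsub ((Set.uIcc_of_le hcd.le) ▸ hx)))
          ((hc.mono (by rw [Set.uIcc_of_le hcd.le]; exact hsub)).intervalIntegrable)).symm
      have hdistlb : (‖Γ' c‖ - ε) * Δ ≤ dist (γ c) (γ d) := by
        set u : E := ‖Γ' c‖⁻¹ • Γ' c with hu
        have hnu : ‖u‖ = 1 := by
          rw [hu, norm_smul, norm_inv, norm_norm, inv_mul_cancel₀ (by positivity)]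
        have hinner : ∀ x ∈ Set.Icc c d, ‖Γ' c‖ - ε ≤ inner ℝ u (Γ' x) := by
          intro x hx
          have h1 : (inner ℝ u (Γ' c) : ℝ) = ‖Γ' c‖ := by
            rw [hu, real_inner_smul_left, real_inner_self_eq_norm_sq]
            rw [pow_two, ← mul_assoc, inv_mul_cancel₀ (by positivity), one_mul]
          have h2 : |(inner ℝ u (Γ' x - Γ' c) : ℝ)| ≤ ε := by
            calc |(inner ℝ u (Γ' x - Γ' c) : ℝ)| ≤ ‖u‖ * ‖Γ' x - Γ' c‖ :=
                abs_real_inner_le_norm _ _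
              _ = ‖Γ' x - Γ' c‖ := by rw [hnu, one_mul]
              _ ≤ ε := hucc x hx
          have h3 : (inner ℝ u (Γ' x) : ℝ) = inner ℝ u (Γ' c) + inner ℝ u (Γ' x - Γ' c) := by
            rw [← inner_add_right]; norm_num
          rw [h3, h1]
          linarith [(abs_le.1 h2).1]
        have hint : IntervalIntegrable Γ' volume c d :=
          (hc.mono (by rw [Set.uIcc_of_le hcd.le]; exact hsub)).intervalIntegrable
        have hcomm : (∫ x in c..d, (inner ℝ u (Γ' x) : ℝ)) = inner ℝ u (γ d - γ c) := by
          rw [hFTC]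
          exact (innerSL ℝ u).intervalIntegral_comp_comm hint
        have hcont_inner : ContinuousOn (fun x => (inner ℝ u (Γ' x) : ℝ)) (Set.uIcc c d) := by
          rw [Set.uIcc_of_le hcd.le]
          exact (innerSL ℝ u).continuous.comp_continuousOn (hc.mono hsub)
        have hmono : (‖Γ' c‖ - ε) * Δ ≤ ∫ x in c..d, (inner ℝ u (Γ' x) : ℝ) := by
          have h4 : (∫ _ in c..d, (‖Γ' c‖ - ε)) ≤ ∫ x in c..d, (inner ℝ u (Γ' x) : ℝ) := by
            refine intervalIntegral.integral_mono_on hcd.le intervalIntegrable_const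
              hcont_inner.intervalIntegrable ?_
            intro x hx
            exact hinner x ((Set.uIcc_of_le hcd.le) ▸ Set.Icc_subset_uIcc hx)
          rw [intervalIntegral.integral_const, smul_eq_mul, hdc] at h4
          linarith
        have hle : (inner ℝ u (γ d - γ c) : ℝ) ≤ ‖γ d - γ c‖ := by
          calc (inner ℝ u (γ d - γ c) : ℝ) ≤ ‖u‖ * ‖γ d - γ c‖ := real_inner_le_norm _ _
            _ = ‖γ d - γ c‖ := by rw [hnu, one_mul]
        rw [dist_eq_norm, norm_sub_rev]
        calc (‖Γ' c‖ - ε) * Δ ≤ ∫ x in c..d, (inner ℝ u (Γ' x) : ℝ) := hmono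
          _ = inner ℝ u (γ d - γ c) := hcomm
          _ ≤ ‖γ d - γ c‖ := hle
      have hIocIcc : μH[1] (γ '' Set.Ioc c d) = μH[1] (γ '' Set.Icc c d) := by
        apply le_antisymm (measure_mono (Set.image_mono Set.Ioc_subset_Icc_self))
        have hss : γ '' Set.Icc c d ⊆ γ '' Set.Ioc c d ∪ {γ c} := by
          rw [← Set.image_singleton, ← Set.image_union]
          apply Set.image_mono
          intro x hx
          rcases eq_or_lt_of_le hx.1 with h | h
          · exact Or.inr (by simp [← h])
          · exact Or.inl ⟨h, hx.2⟩
        calc μH[1] (γ '' Set.Icc c d) ≤ μH[1] (γ '' Set.Ioc c d ∪ {γ c}) := measure_mono hss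
          _ ≤ μH[1] (γ '' Set.Ioc c d) + μH[1] ({γ c} : Set E) := measure_union_le _ _
          _ = μH[1] (γ '' Set.Ioc c d) := by rw [h1_singleton]; simp
      have hofReal_split : ENNReal.ofReal (‖Γ' c‖ + ε)
          ≤ ENNReal.ofReal (‖Γ' c‖ - ε) + ENNReal.ofReal (2*ε) := by
        rw [show ‖Γ' c‖ + ε = (‖Γ' c‖ - ε) + 2*ε by ring]
        exact ENNReal.ofReal_add_le
      have hmulΔ : ENNReal.ofReal (2*ε) * ENNReal.ofReal Δ = ENNReal.ofReal (2*ε*Δ) :=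
        (ENNReal.ofReal_mul (by positivity)).symm
      have hlwr : ENNReal.ofReal (‖Γ' c‖ - ε) * ENNReal.ofReal Δ
          ≤ ∫⁻ t in Set.Ioc c d, (‖Γ' t‖₊ : ℝ≥0∞) :=
        calc ENNReal.ofReal (‖Γ' c‖ - ε) * ENNReal.ofReal Δ
            = ∫⁻ _ in Set.Ioc c d, ENNReal.ofReal (‖Γ' c‖ - ε) := by
              rw [setLIntegral_const, Real.volume_Ioc, hdc]
          _ ≤ ∫⁻ t in Set.Ioc c d, (‖Γ' t‖₊ : ℝ≥0∞) := by
              refine setLIntegral_mono' measurableSet_Ioc (fun x hx => ?_)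
              rw [← ENNReal.ofReal_coe_nnreal, coe_nnnorm]
              exact ENNReal.ofReal_le_ofReal (hlb x (Set.Ioc_subset_Icc_self hx))
      have hupr : (∫⁻ t in Set.Ioc c d, (‖Γ' t‖₊ : ℝ≥0∞))
          ≤ ENNReal.ofReal (‖Γ' c‖ + ε) * ENNReal.ofReal Δ :=
        calc (∫⁻ t in Set.Ioc c d, (‖Γ' t‖₊ : ℝ≥0∞))
            ≤ ∫⁻ _ in Set.Ioc c d, ENNReal.ofReal (‖Γ' c‖ + ε) := by
              refine setLIntegral_mono' measurableSet_Ioc (fun x hx => ?_)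
              rw [← ENNReal.ofReal_coe_nnreal, coe_nnnorm]
              exact ENNReal.ofReal_le_ofReal (hub x (Set.Ioc_subset_Icc_self hx))
          _ = ENNReal.ofReal (‖Γ' c‖ + ε) * ENNReal.ofReal Δ := by
              rw [setLIntegral_const, Real.volume_Ioc, hdc]
      constructor
      · -- upper bound on μH
        have h1 : μH[1] (γ '' Set.Ioc c d)
            ≤ ENNReal.ofReal (‖Γ' c‖ + ε) * ENNReal.ofReal Δ := by
          rw [hIocIcc]
          set M : ℝ≥0 := ⟨‖Γ' c‖ + ε, by positivity⟩ with hM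
          have hMle : ∀ t ∈ Set.Icc c d, ‖Γ' t‖₊ ≤ M := by
            intro t ht
            rw [← NNReal.coe_le_coe, coe_nnnorm]
            exact hub t ht
          have hMcast : ((M : ℝ≥0) : ℝ≥0∞) = ENNReal.ofReal (‖Γ' c‖ + ε) := by
            rw [ENNReal.ofReal, Real.toNNReal_of_nonneg (by positivity)]
            rfl
          calc μH[1] (γ '' Set.Icc c d)
              ≤ ((M : ℝ≥0) : ℝ≥0∞) * volume (Set.Icc c d) :=
                h1_image_le (convex_Icc c d) (fun t ht => hd t (hsub ht)) hMle
            _ = ENNReal.ofReal (‖Γ' c‖ + ε) * ENNReal.ofReal Δ := by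
                rw [Real.volume_Icc, hdc, hMcast]
        calc μH[1] (γ '' Set.Ioc c d)
            ≤ ENNReal.ofReal (‖Γ' c‖ + ε) * ENNReal.ofReal Δ := h1
          _ ≤ (ENNReal.ofReal (‖Γ' c‖ - ε) + ENNReal.ofReal (2*ε)) * ENNReal.ofReal Δ :=
              mul_le_mul_left hofReal_split _
          _ = ENNReal.ofReal (‖Γ' c‖ - ε) * ENNReal.ofReal Δ + ENNReal.ofReal (2*ε*Δ) := by
              rw [add_mul, hmulΔ]
          _ ≤ (∫⁻ t in Set.Ioc c d, (‖Γ' t‖₊ : ℝ≥0∞)) + ENNReal.ofReal (2*ε*Δ) :=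
              add_le_add_left hlwr _
      · -- lower bound on μH
        have hdist_le : ENNReal.ofReal (‖Γ' c‖ - ε) * ENNReal.ofReal Δ
            ≤ μH[1] (γ '' Set.Ioc c d) := by
          rcases le_or_gt (‖Γ' c‖ - ε) 0 with h | h
          · rw [ENNReal.ofReal_of_nonpos h, zero_mul]; exact zero_le
          · have hconn : IsPreconnected (γ '' Set.Icc c d) :=
              (isPreconnected_Icc).image γ (hγcont.mono hsub)
            have hmemc : γ c ∈ γ '' Set.Icc c d :=
              ⟨c, Set.left_mem_Icc.2 hcd.le, rfl⟩
            have hmemd : γ d ∈ γ '' Set.Icc c d :=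
              ⟨d, Set.right_mem_Icc.2 hcd.le, rfl⟩
            calc ENNReal.ofReal (‖Γ' c‖ - ε) * ENNReal.ofReal Δ
                = ENNReal.ofReal ((‖Γ' c‖ - ε) * Δ) := (ENNReal.ofReal_mul h.le).symm
              _ ≤ ENNReal.ofReal (dist (γ c) (γ d)) := ENNReal.ofReal_le_ofReal hdistlb
              _ ≤ μH[1] (γ '' Set.Icc c d) := h1_ge_dist hconn hmemc hmemd
              _ = μH[1] (γ '' Set.Ioc c d) := hIocIcc.symm
        calc (∫⁻ t in Set.Ioc c d, (‖Γ' t‖₊ : ℝ≥0∞))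
            ≤ ENNReal.ofReal (‖Γ' c‖ + ε) * ENNReal.ofReal Δ := hupr
          _ ≤ (ENNReal.ofReal (‖Γ' c‖ - ε) + ENNReal.ofReal (2*ε)) * ENNReal.ofReal Δ :=
              mul_le_mul_left hofReal_split _
          _ = ENNReal.ofReal (‖Γ' c‖ - ε) * ENNReal.ofReal Δ + ENNReal.ofReal (2*ε*Δ) := by
              rw [add_mul, hmulΔ]
          _ ≤ μH[1] (γ '' Set.Ioc c d) + ENNReal.ofReal (2*ε*Δ) :=
              add_le_add_left hdist_le _
    -- sum up
    have hsumconst : ∑ _i ∈ Finset.range N, ENNReal.ofReal (2*ε*Δ)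
        = ENNReal.ofReal (2*ε*(b-a)) := by
      rw [Finset.sum_const, Finset.card_range, nsmul_eq_mul]
      rw [show ((N:ℕ):ℝ≥0∞) = ENNReal.ofReal (N:ℝ) by
        rw [ENNReal.ofReal_natCast]]
      rw [← ENNReal.ofReal_mul (by positivity)]
      congr 1
      rw [hΔdef]
      field_simp
    constructor
    · rw [hμsplit, hlsplit, ← hsumconst, ← Finset.sum_add_distrib]
      exact Finset.sum_le_sum (fun i hi => (hpiece i (Finset.mem_range.1 hi)).1)
    · rw [hμsplit, hlsplit, ← hsumconst, ← Finset.sum_add_distrib]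
      exact Finset.sum_le_sum (fun i hi => (hpiece i (Finset.mem_range.1 hi)).2)
  -- conclude
  have hba : 0 < b - a := by linarith
  apply le_antisymm
  · refine ENNReal.le_of_forall_pos_le_add (fun ε' hε' _ => ?_)
    have hεpos : 0 < (ε' : ℝ) / (2*(b-a)) := by positivity
    refine ((key _ hεpos).1).trans ?_
    have h2 : 2 * ((ε' : ℝ)/(2*(b-a))) * (b-a) = (ε' : ℝ) := by
      field_simp
    rw [h2, ENNReal.ofReal_coe_nnreal]
  · refine ENNReal.le_of_forall_pos_le_add (fun ε' hε' _ => ?_)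
    have hεpos : 0 < (ε' : ℝ) / (2*(b-a)) := by positivity
    refine ((key _ hεpos).2).trans ?_
    have h2 : 2 * ((ε' : ℝ)/(2*(b-a))) * (b-a) = (ε' : ℝ) := by
      field_simp
    rw [h2, ENNReal.ofReal_coe_nnreal]

lemma measure_union_null'' {α : Type*} [MeasurableSpace α] (μ : Measure α) (s t : Set α)
    (ht : μ t = 0) : μ (s ∪ t) = μ s :=
  le_antisymm ((measure_union_le s t).trans (by rw [ht, add_zero]))
    (measure_mono Set.subset_union_left)

/-- For a C¹ spiral `γ(t) = t (cos θ(t), sin θ(t))` with `t θ'(t) → 0` as `t → 0⁺`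
(and `γ` injective on `(0,1]`), the set `K = closure(γ((0,1])) ∪ {0}` satisfies
`H¹(K ∩ B(0,r)) = ∫₀^r √(1 + t²θ'(t)²) dt = r + o(r)`; in particular `K` has
Hausdorff 1-density `1/2` at the origin. -/
theorem stmt3
    (θ θ' : ℝ → ℝ)
    (hderiv : ∀ t ∈ Set.Ioc (0:ℝ) 1, HasDerivAt θ (θ' t) t)
    (hcont : ContinuousOn θ' (Set.Ioc (0:ℝ) 1))
    (hsmall : Tendsto (fun t => t * θ' t) (𝓝[>] (0:ℝ)) (𝓝 0))
    (γ : ℝ → EuclideanSpace ℝ (Fin 2))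
    (hγ : ∀ t, γ t = (WithLp.equiv 2 (Fin 2 → ℝ)).symm
      ![t * Real.cos (θ t), t * Real.sin (θ t)])
    (hinj : Set.InjOn γ (Set.Ioc (0:ℝ) 1))
    (K : Set (EuclideanSpace ℝ (Fin 2)))
    (hK : K = closure (γ '' Set.Ioc (0:ℝ) 1) ∪ {0}) :
    (∀ r ∈ Set.Ioc (0:ℝ) 1,
      μH[1] (K ∩ Metric.ball 0 r)
        = ENNReal.ofReal (∫ t in Set.Ioc (0:ℝ) r, Real.sqrt (1 + t^2 * (θ' t)^2))) ∧
    Tendsto (fun r : ℝ => μH[1] (K ∩ Metric.ball 0 r) / ENNReal.ofReal (2 * r))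
      (𝓝[>] (0:ℝ)) (𝓝 (1/2)) := by
  set f : ℝ → ℝ := fun t => Real.sqrt (1 + t^2 * (θ' t)^2) with hfdef
  set Γ' : ℝ → EuclideanSpace ℝ (Fin 2) := fun t =>
    (WithLp.equiv 2 (Fin 2 → ℝ)).symm
      ![Real.cos (θ t) - t * Real.sin (θ t) * θ' t,
        Real.sin (θ t) + t * Real.cos (θ t) * θ' t] with hΓ'def
  -- norms
  have hnormγ : ∀ t, ‖γ t‖ = |t| := by
    intro t
    rw [hγ t, EuclideanSpace.norm_eq]
    simp only [WithLp.equiv_symm_apply, WithLp.ofLp_toLp, PiLp.toLp_apply, Fin.sum_univ_two, Matrix.cons_val_zero,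
      Matrix.cons_val_one, Matrix.head_cons, Real.norm_eq_abs, sq_abs]
    rw [show (t * Real.cos (θ t))^2 + (t * Real.sin (θ t))^2 = t^2 by
      linear_combination t^2 * (Real.sin_sq_add_cos_sq (θ t))]
    exact Real.sqrt_sq_eq_abs t
  have hΓnorm : ∀ t, ‖Γ' t‖ = f t := by
    intro t
    rw [hΓ'def, hfdef, EuclideanSpace.norm_eq]
    simp only [WithLp.equiv_symm_apply, WithLp.ofLp_toLp, PiLp.toLp_apply, Fin.sum_univ_two, Matrix.cons_val_zero,
      Matrix.cons_val_one, Matrix.head_cons, Real.norm_eq_abs, sq_abs]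
    congr 1
    linear_combination (1 + t^2 * (θ' t)^2) * (Real.sin_sq_add_cos_sq (θ t))
  have hf1 : ∀ t, 1 ≤ f t := by
    intro t
    rw [hfdef, show (1:ℝ) = Real.sqrt 1 by rw [Real.sqrt_one]]
    apply Real.sqrt_le_sqrt
    nlinarith [sq_nonneg (t * θ' t), sq_nonneg t, sq_nonneg (θ' t), Real.sqrt_one]
  have hΓ1 : ∀ t, (1:ℝ) ≤ ‖Γ' t‖ := fun t => (hΓnorm t) ▸ hf1 t
  -- derivative
  have hd2 : ∀ t ∈ Set.Ioc (0:ℝ) 1, HasDerivAt γ (Γ' t) t := by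
    intro t ht
    have hθ := hderiv t ht
    have hcos : HasDerivAt (fun s => Real.cos (θ s)) (-Real.sin (θ t) * θ' t) t :=
      (Real.hasDerivAt_cos (θ t)).comp t hθ
    have hsin : HasDerivAt (fun s => Real.sin (θ s)) (Real.cos (θ t) * θ' t) t :=
      (Real.hasDerivAt_sin (θ t)).comp t hθ
    have h1 : HasDerivAt (fun s => s * Real.cos (θ s))
        (Real.cos (θ t) - t * Real.sin (θ t) * θ' t) t := by
      have := (hasDerivAt_id t).mul hcos
      refine this.congr_deriv ?_
      simp [id]; ring
    have h2 : HasDerivAt (fun s => s * Real.sin (θ s))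
        (Real.sin (θ t) + t * Real.cos (θ t) * θ' t) t := by
      have := (hasDerivAt_id t).mul hsin
      refine this.congr_deriv ?_
      simp [id]; ring
    have hpi : HasDerivAt (fun s => (![s * Real.cos (θ s), s * Real.sin (θ s)] : Fin 2 → ℝ))
        ![Real.cos (θ t) - t * Real.sin (θ t) * θ' t,
          Real.sin (θ t) + t * Real.cos (θ t) * θ' t] t := by
      rw [hasDerivAt_pi]
      intro i
      fin_cases i
      · simpa using h1
      · simpa using h2
    have hL := ((EuclideanSpace.equiv (Fin 2) ℝ).symm.toContinuousLinearMap.hasFDerivAt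
      (x := (![t * Real.cos (θ t), t * Real.sin (θ t)] : Fin 2 → ℝ))).comp_hasDerivAt t hpi
    have hγeq : γ = fun s => (EuclideanSpace.equiv (Fin 2) ℝ).symm.toContinuousLinearMap
        (![s * Real.cos (θ s), s * Real.sin (θ s)] : Fin 2 → ℝ) := by
      funext s; rw [hγ s]; rfl
    rw [hγeq, hΓ'def]
    exact hL
  -- continuity of Γ'
  have hθc : ContinuousOn θ (Set.Ioc (0:ℝ) 1) :=
    fun t ht => (hderiv t ht).continuousAt.continuousWithinAt
  have hΓcont : ContinuousOn Γ' (Set.Ioc (0:ℝ) 1) := by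
    rw [hΓ'def]
    apply Continuous.comp_continuousOn
      ((EuclideanSpace.equiv (Fin 2) ℝ).symm.continuous)
    apply continuousOn_pi.2
    intro i
    fin_cases i
    · simpa [Pi.sub_def, Pi.add_def, Pi.mul_def, Function.comp_def] using
        ((Real.continuous_cos.comp_continuousOn hθc).sub
          (((continuousOn_id.mul (Real.continuous_sin.comp_continuousOn hθc))).mul hcont))
    · simpa [Pi.sub_def, Pi.add_def, Pi.mul_def, Function.comp_def] using
        ((Real.continuous_sin.comp_continuousOn hθc).add
          (((continuousOn_id.mul (Real.continuous_cos.comp_continuousOn hθc))).mul hcont))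
  -- small parameter control
  have hsmall' : ∀ ε > (0:ℝ), ∃ δ > (0:ℝ), ∀ t, 0 < t → t < δ → |t * θ' t| < ε := by
    intro ε hε
    obtain ⟨δ, hδ, h⟩ := Metric.tendsto_nhdsWithin_nhds.1 hsmall ε hε
    refine ⟨δ, hδ, fun t ht htδ => ?_⟩
    have := h (Set.mem_Ioi.2 ht) (by rwa [Real.dist_eq, sub_zero, abs_of_pos ht])
    rwa [Real.dist_eq, sub_zero] at this
  have hfsmall : ∀ ε > (0:ℝ), ∃ δ > (0:ℝ), ∀ t, 0 < t → t < δ → f t ≤ 1 + ε := by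
    intro ε hε
    obtain ⟨δ, hδ, h⟩ := hsmall' ε hε
    refine ⟨δ, hδ, fun t ht htδ => ?_⟩
    rw [hfdef]
    rw [show (1:ℝ) + ε = Real.sqrt ((1+ε)^2) by
      rw [Real.sqrt_sq (by linarith)]]
    apply Real.sqrt_le_sqrt
    have h2 : |t * θ' t| < ε := h t ht htδ
    have h3 : t^2 * (θ' t)^2 = (t * θ' t)^2 := by ring
    nlinarith [abs_nonneg (t * θ' t), sq_abs (t * θ' t)]
  -- the central computation
  have hmain : ∀ r ∈ Set.Ioc (0:ℝ) 1,
      μH[1] (γ '' Set.Ioc 0 r) = ∫⁻ t in Set.Ioc 0 r, (‖Γ' t‖₊ : ℝ≥0∞) := by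
    intro r hr
    obtain ⟨δ0, hδ0, hδ0'⟩ := hfsmall 1 one_pos
    have hkey : ∀ a, 0 < a → a < r → a < δ0 →
        μH[1] (γ '' Set.Ioc 0 r) ≤ (∫⁻ t in Set.Ioc 0 r, (‖Γ' t‖₊ : ℝ≥0∞))
          + ENNReal.ofReal (2*a) ∧
        (∫⁻ t in Set.Ioc 0 r, (‖Γ' t‖₊ : ℝ≥0∞)) ≤ μH[1] (γ '' Set.Ioc 0 r)
          + ENNReal.ofReal (2*a) := by
      intro a ha har haδ
      have hsub1 : Set.Ioc (0:ℝ) a ⊆ Set.Ioc 0 1 :=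
        Set.Ioc_subset_Ioc le_rfl (le_trans har.le hr.2)
      have hsubar : Set.Icc a r ⊆ Set.Ioc 0 1 :=
        fun x hx => ⟨lt_of_lt_of_le ha hx.1, le_trans hx.2 hr.2⟩
      have hbound2 : ∀ t ∈ Set.Ioc (0:ℝ) a, ‖Γ' t‖₊ ≤ (2:ℝ≥0) := by
        intro t ht
        rw [← NNReal.coe_le_coe, coe_nnnorm, hΓnorm]
        push_cast
        have := hδ0' t ht.1 (lt_of_le_of_lt ht.2 haδ)
        linarith
      have hμsmall : μH[1] (γ '' Set.Ioc 0 a) ≤ ENNReal.ofReal (2*a) := by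
        calc μH[1] (γ '' Set.Ioc 0 a) ≤ ((2:ℝ≥0) : ℝ≥0∞) * volume (Set.Ioc (0:ℝ) a) :=
              h1_image_le (convex_Ioc 0 a) (fun t ht => hd2 t (hsub1 ht)) hbound2
          _ = ENNReal.ofReal (2*a) := by
              rw [Real.volume_Ioc, sub_zero, ENNReal.ofReal_mul (by norm_num : (0:ℝ) ≤ 2)]
              congr 1
              simp
      have hlsmall : (∫⁻ t in Set.Ioc (0:ℝ) a, (‖Γ' t‖₊ : ℝ≥0∞)) ≤ ENNReal.ofReal (2*a) := by
        calc (∫⁻ t in Set.Ioc (0:ℝ) a, (‖Γ' t‖₊ : ℝ≥0∞))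
            ≤ ∫⁻ _ in Set.Ioc (0:ℝ) a, ((2:ℝ≥0) : ℝ≥0∞) := by
              refine setLIntegral_mono' measurableSet_Ioc (fun x hx => ?_)
              exact_mod_cast hbound2 x hx
          _ = ENNReal.ofReal (2*a) := by
              rw [setLIntegral_const, Real.volume_Ioc, sub_zero,
                ENNReal.ofReal_mul (by norm_num : (0:ℝ) ≤ 2)]
              congr 1
              simp
      have hsegm : μH[1] (γ '' Set.Ioc a r) = ∫⁻ t in Set.Ioc a r, (‖Γ' t‖₊ : ℝ≥0∞) :=
        seg har (fun t ht => hd2 t (hsubar ht)) (hΓcont.mono hsubar)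
          (fun t ht => hΓ1 t) (hinj.mono hsubar)
      have hsplit : Set.Ioc (0:ℝ) r = Set.Ioc 0 a ∪ Set.Ioc a r :=
        (Set.Ioc_union_Ioc_eq_Ioc ha.le har.le).symm
      constructor
      · calc μH[1] (γ '' Set.Ioc 0 r)
            ≤ μH[1] (γ '' Set.Ioc 0 a) + μH[1] (γ '' Set.Ioc a r) := by
              rw [hsplit, Set.image_union]; exact measure_union_le _ _
          _ ≤ ENNReal.ofReal (2*a) + ∫⁻ t in Set.Ioc a r, (‖Γ' t‖₊ : ℝ≥0∞) := by
              rw [hsegm]; exact add_le_add_left hμsmall _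
          _ ≤ ENNReal.ofReal (2*a) + ∫⁻ t in Set.Ioc 0 r, (‖Γ' t‖₊ : ℝ≥0∞) :=
              add_le_add_right (lintegral_mono_set (by rw [hsplit]; exact Set.subset_union_right)) _
          _ = (∫⁻ t in Set.Ioc 0 r, (‖Γ' t‖₊ : ℝ≥0∞)) + ENNReal.ofReal (2*a) := add_comm _ _
      · calc (∫⁻ t in Set.Ioc (0:ℝ) r, (‖Γ' t‖₊ : ℝ≥0∞))
            = (∫⁻ t in Set.Ioc (0:ℝ) a, (‖Γ' t‖₊ : ℝ≥0∞))
              + ∫⁻ t in Set.Ioc a r, (‖Γ' t‖₊ : ℝ≥0∞) := by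
              rw [hsplit, lintegral_union measurableSet_Ioc (Set.Ioc_disjoint_Ioc_of_le le_rfl)]
          _ ≤ ENNReal.ofReal (2*a) + μH[1] (γ '' Set.Ioc a r) := by
              rw [hsegm]; exact add_le_add_left hlsmall _
          _ ≤ ENNReal.ofReal (2*a) + μH[1] (γ '' Set.Ioc 0 r) :=
              add_le_add_right (measure_mono (Set.image_mono
                (by rw [hsplit]; exact Set.subset_union_right))) _
          _ = μH[1] (γ '' Set.Ioc 0 r) + ENNReal.ofReal (2*a) := add_comm _ _
    apply le_antisymm
    · refine ENNReal.le_of_forall_pos_le_add (fun ε' hε' _ => ?_)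
      set a := min (min (r/2) (δ0/2)) ((ε' : ℝ)/2) with hadef
      have ha : 0 < a := by
        apply lt_min (lt_min (by linarith [hr.1]) (by linarith)) _
        have : (0:ℝ) < ε' := hε'
        linarith
      have h1 := (hkey a ha
        (lt_of_le_of_lt (le_trans (min_le_left _ _) (min_le_left _ _)) (by linarith [hr.1]))
        (lt_of_le_of_lt (le_trans (min_le_left _ _) (min_le_right _ _)) (by linarith))).1
      refine h1.trans (add_le_add_right ?_ _)
      have h2a : 2*a ≤ (ε' : ℝ) := by
        have := min_le_right (min (r/2) (δ0/2)) ((ε' : ℝ)/2)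
        linarith
      calc ENNReal.ofReal (2*a) ≤ ENNReal.ofReal (ε' : ℝ) := ENNReal.ofReal_le_ofReal h2a
        _ = (ε' : ℝ≥0∞) := ENNReal.ofReal_coe_nnreal
    · refine ENNReal.le_of_forall_pos_le_add (fun ε' hε' _ => ?_)
      set a := min (min (r/2) (δ0/2)) ((ε' : ℝ)/2) with hadef
      have ha : 0 < a := by
        apply lt_min (lt_min (by linarith [hr.1]) (by linarith)) _
        have : (0:ℝ) < ε' := hε'
        linarith
      have h1 := (hkey a ha
        (lt_of_le_of_lt (le_trans (min_le_left _ _) (min_le_left _ _)) (by linarith [hr.1]))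
        (lt_of_le_of_lt (le_trans (min_le_left _ _) (min_le_right _ _)) (by linarith))).2
      refine h1.trans (add_le_add_right ?_ _)
      have h2a : 2*a ≤ (ε' : ℝ) := by
        have := min_le_right (min (r/2) (δ0/2)) ((ε' : ℝ)/2)
        linarith
      calc ENNReal.ofReal (2*a) ≤ ENNReal.ofReal (ε' : ℝ) := ENNReal.ofReal_le_ofReal h2a
        _ = (ε' : ℝ≥0∞) := ENNReal.ofReal_coe_nnreal
  -- integrability and the Bochner/lintegral bridge
  have hfcontOn : ContinuousOn f (Set.Ioc (0:ℝ) 1) := by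
    have : ContinuousOn (fun t => ‖Γ' t‖) (Set.Ioc (0:ℝ) 1) := hΓcont.norm
    exact this.congr (fun t _ => (hΓnorm t).symm)
  have hfint : ∀ r ∈ Set.Ioc (0:ℝ) 1, IntegrableOn f (Set.Ioc 0 r) := by
    intro r hr
    obtain ⟨δ0, hδ0, hδ0'⟩ := hfsmall 1 one_pos
    set c := min (δ0/2) r with hcdef
    have hc : 0 < c := lt_min (by linarith) hr.1
    have hcr : c ≤ r := min_le_right _ _
    have hint1 : IntegrableOn f (Set.Ioc 0 c) := by
      refine ⟨(hfcontOn.mono (Set.Ioc_subset_Ioc le_rfl (le_trans hcr hr.2))).aestronglyMeasurable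
        measurableSet_Ioc, ?_⟩
      apply HasFiniteIntegral.restrict_of_bounded (C := 2)
        (measure_Ioc_lt_top)
      refine (ae_restrict_iff' measurableSet_Ioc).2 (Filter.Eventually.of_forall fun t ht => ?_)
      rw [Real.norm_eq_abs, abs_of_nonneg (le_trans zero_le_one (hf1 t))]
      have := hδ0' t ht.1 (lt_of_le_of_lt ht.2 (lt_of_le_of_lt (min_le_left _ _) (by linarith)))
      linarith
    have hint2 : IntegrableOn f (Set.Icc c r) := by
      apply ContinuousOn.integrableOn_Icc
      exact hfcontOn.mono (fun x hx => ⟨lt_of_lt_of_le hc hx.1, le_trans hx.2 hr.2⟩)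
    exact (hint1.union hint2).mono_set (fun x hx => by
      rcases le_or_gt x c with h | h
      · exact Or.inl ⟨hx.1, h⟩
      · exact Or.inr ⟨h.le, hx.2⟩)
  have hbridge : ∀ r ∈ Set.Ioc (0:ℝ) 1,
      ENNReal.ofReal (∫ t in Set.Ioc (0:ℝ) r, f t)
        = ∫⁻ t in Set.Ioc (0:ℝ) r, (‖Γ' t‖₊ : ℝ≥0∞) := by
    intro r hr
    rw [MeasureTheory.ofReal_integral_eq_lintegral_ofReal (hfint r hr)
      (Filter.Eventually.of_forall fun t => Real.sqrt_nonneg _)]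
    exact lintegral_congr fun t => by rw [← hΓnorm t, ← ENNReal.ofReal_coe_nnreal, coe_nnnorm]
  -- geometry of K
  have hγ0 : γ 0 = 0 := by
    have h := hnormγ 0
    simp only [abs_zero] at h
    exact norm_eq_zero.1 h
  have hγcont01 : ContinuousOn γ (Set.Icc 0 1) := by
    intro t ht
    rcases eq_or_lt_of_le ht.1 with h0 | h0
    · rw [← h0]
      unfold ContinuousWithinAt
      rw [hγ0]
      apply squeeze_zero_norm (fun s => le_of_eq (hnormγ s))
      have habs : Tendsto (fun s : ℝ => |s|) (𝓝 0) (𝓝 |0|) := continuous_abs.tendsto 0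
      simpa using habs.mono_left nhdsWithin_le_nhds
    · exact (hd2 t ⟨h0, ht.2⟩).continuousAt.continuousWithinAt
  have himgIcc : γ '' Set.Icc 0 1 = γ '' Set.Ioc 0 1 ∪ {0} := by
    rw [← Set.Ioc_insert_left (zero_le_one), Set.image_insert_eq, hγ0, Set.insert_eq]
    exact Set.union_comm _ _
  have hK' : K = γ '' Set.Ioc 0 1 ∪ {0} := by
    rw [hK]
    apply subset_antisymm
    · apply Set.union_subset
      · calc closure (γ '' Set.Ioc 0 1)
            ⊆ γ '' Set.Icc 0 1 := closure_minimal
              (Set.image_mono Set.Ioc_subset_Icc_self)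
              (isCompact_Icc.image_of_continuousOn hγcont01).isClosed
          _ = γ '' Set.Ioc 0 1 ∪ {0} := himgIcc
      · exact Set.subset_union_right
    · exact Set.union_subset_union_left _ subset_closure
  have hKball : ∀ r ∈ Set.Ioc (0:ℝ) 1,
      K ∩ Metric.ball 0 r = γ '' Set.Ioo 0 r ∪ {0} := by
    intro r hr
    rw [hK']
    ext x
    simp only [Set.mem_inter_iff, Set.mem_union, Set.mem_singleton_iff, Metric.mem_ball,
      dist_zero_right]
    constructor
    · rintro ⟨hx1 | hx2, hb⟩
      · obtain ⟨t, ht, rfl⟩ := hx1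
        left
        refine ⟨t, ⟨ht.1, ?_⟩, rfl⟩
        rwa [hnormγ t, abs_of_pos ht.1] at hb
      · exact Or.inr hx2
    · rintro (⟨t, ht, rfl⟩ | rfl)
      · exact ⟨Or.inl ⟨t, ⟨ht.1, le_trans ht.2.le hr.2⟩, rfl⟩,
          by rw [hnormγ t, abs_of_pos ht.1]; exact ht.2⟩
      · exact ⟨Or.inr rfl, by simpa using hr.1⟩
  have hμKball : ∀ r ∈ Set.Ioc (0:ℝ) 1,
      μH[1] (K ∩ Metric.ball 0 r) = μH[1] (γ '' Set.Ioc 0 r) := by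
    intro r hr
    rw [hKball r hr, measure_union_null'' _ _ _ (h1_singleton 0)]
    have himg : γ '' Set.Ioc 0 r = γ '' Set.Ioo 0 r ∪ {γ r} := by
      rw [← Set.Ioo_insert_right hr.1, Set.image_insert_eq, Set.insert_eq]
      exact Set.union_comm _ _
    rw [himg, measure_union_null'' _ _ _ (h1_singleton (γ r))]
  -- part 1
  have hpart1 : ∀ r ∈ Set.Ioc (0:ℝ) 1,
      μH[1] (K ∩ Metric.ball 0 r)
        = ENNReal.ofReal (∫ t in Set.Ioc (0:ℝ) r, f t) := by
    intro r hr
    rw [hμKball r hr, hmain r hr, ← hbridge r hr]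
  refine ⟨hpart1, ?_⟩
  -- part 2
  have hreal : Tendsto (fun r : ℝ => (∫ t in Set.Ioc (0:ℝ) r, f t) / (2*r))
      (𝓝[>] (0:ℝ)) (𝓝 (1/2)) := by
    rw [Metric.tendsto_nhdsWithin_nhds]
    intro ε hε
    obtain ⟨δ1, hδ1, hδ1'⟩ := hfsmall (min ε 1) (lt_min hε one_pos)
    refine ⟨min δ1 1, lt_min hδ1 one_pos, fun {r} hr hrd => ?_⟩
    have hr0 : 0 < r := hr
    have hrlt : r < min δ1 1 := by rwa [Real.dist_eq, sub_zero, abs_of_pos hr0] at hrd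
    have hrδ : r < δ1 := lt_of_lt_of_le hrlt (min_le_left _ _)
    have hr1 : r ≤ 1 := le_of_lt (lt_of_lt_of_le hrlt (min_le_right _ _))
    have hint : IntegrableOn f (Set.Ioc 0 r) := hfint r ⟨hr0, hr1⟩
    have hconst : IntegrableOn (fun _ : ℝ => (1:ℝ) + min ε 1) (Set.Ioc 0 r) :=
      integrableOn_const measure_Ioc_lt_top.ne
    have hconst1 : IntegrableOn (fun _ : ℝ => (1:ℝ)) (Set.Ioc 0 r) :=
      integrableOn_const measure_Ioc_lt_top.ne
    have hIl : r ≤ ∫ t in Set.Ioc (0:ℝ) r, f t := by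
      have h := setIntegral_mono_on hconst1 hint measurableSet_Ioc
        (fun x hx => hf1 x)
      rw [setIntegral_const] at h
      simp [Real.volume_Ioc, ENNReal.toReal_ofReal hr0.le] at h; exact h.1
    have hIu : (∫ t in Set.Ioc (0:ℝ) r, f t) ≤ (1 + min ε 1) * r := by
      have h := setIntegral_mono_on hint hconst measurableSet_Ioc
        (fun x hx => hδ1' x hx.1 (lt_of_le_of_lt hx.2 hrδ))
      rw [setIntegral_const] at h
      calc (∫ t in Set.Ioc (0:ℝ) r, f t)
          ≤ (volume (Set.Ioc (0:ℝ) r)).toReal • (1 + min ε 1) := h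
        _ = (1 + min ε 1) * r := by
            rw [Real.volume_Ioc, sub_zero, ENNReal.toReal_ofReal hr0.le, smul_eq_mul]; ring
    rw [Real.dist_eq, abs_lt]
    have h2r : (0:ℝ) < 2*r := by linarith
    constructor
    · have : (1:ℝ)/2 ≤ (∫ t in Set.Ioc (0:ℝ) r, f t) / (2*r) := by
        rw [le_div_iff₀ h2r]; linarith
      linarith
    · have : (∫ t in Set.Ioc (0:ℝ) r, f t) / (2*r) ≤ (1 + min ε 1)/2 := by
        rw [div_le_div_iff₀ h2r (by norm_num : (0:ℝ) < 2)]
        nlinarith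
      have hm : min ε 1 ≤ ε := min_le_left _ _
      nlinarith
  have hforms : ∀ᶠ r in 𝓝[>] (0:ℝ),
      ENNReal.ofReal ((∫ t in Set.Ioc (0:ℝ) r, f t) / (2*r))
        = μH[1] (K ∩ Metric.ball 0 r) / ENNReal.ofReal (2*r) := by
    filter_upwards [Ioo_mem_nhdsGT (one_pos : (0:ℝ) < 1)] with r hrm
    have hr' : r ∈ Set.Ioc (0:ℝ) 1 := ⟨hrm.1, hrm.2.le⟩
    rw [hpart1 r hr', ENNReal.ofReal_div_of_pos (by linarith [hrm.1])]
  have hofhalf : ENNReal.ofReal ((1:ℝ)/2) = (1/2 : ℝ≥0∞) := by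
    rw [ENNReal.ofReal_div_of_pos (by norm_num), ENNReal.ofReal_one, ENNReal.ofReal_ofNat]
  have htend : Tendsto (fun r : ℝ => ENNReal.ofReal ((∫ t in Set.Ioc (0:ℝ) r, f t) / (2*r)))
      (𝓝[>] (0:ℝ)) (𝓝 (1/2 : ℝ≥0∞)) := by
    rw [← hofhalf]
    exact (ENNReal.continuous_ofReal.tendsto _).comp hreal
  exact htend.congr' hforms
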